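/- arXiv:2301.01958 — 4 statements merged into one kernel-verified Lean document; each statement's English description precedes it below -/
import Mathlib

section
/- For all n, q ≥ 2 with n ≥ 3 or q ≥ 3, there exists f : Q^n → Q^n such that every digraph in 𝔾(f) has minimum in-degree at least 2. Concretely, the function f having one limit cycle of length q^{n-1} + 1 through configurations x^1,...,x^ℓ and mapping all other configurations to x^1 has the property that G(f) has minimum in-degree ≥ 2, and this property is invariant under conjugation by permutations of Q^n. -/
open Finset
open scoped Classical

def Depends {n q : ℕ} (f : (Fin n → Fin q) → (Fin n → Fin q)) (j i : Fin n) : Prop :=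
  ∃ x y : Fin n → Fin q, (∀ k, k ≠ j → x k = y k) ∧ f x i ≠ f y i

lemma nodep_agree {n q : ℕ} {f : (Fin n → Fin q) → (Fin n → Fin q)} {i : Fin n}
    (s : Finset (Fin n)) (hs : ∀ j ∈ s, ¬ Depends f j i) :
    ∀ x y : Fin n → Fin q, (∀ k, k ∉ s → x k = y k) → f x i = f y i := by
  classical
  induction s using Finset.induction_on with
  | empty =>
    intro x y hxy
    have hxy' : x = y := funext fun k => hxy k (by simp)
    rw [hxy']
  | @insert a s ha ih =>
    intro x y hxy
    have hna : ¬ Depends f a i := hs a (mem_insert_self a s)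
    rw [Depends] at hna
    push_neg at hna
    have h1 : f x i = f (Function.update x a (y a)) i := by
      apply hna
      intro k hk
      exact (Function.update_of_ne hk _ _).symm
    have h2 : f (Function.update x a (y a)) i = f y i := by
      apply ih (fun j hj => hs j (mem_insert_of_mem hj))
      intro k hk
      by_cases hka : k = a
      · subst hka; simp
      · rw [Function.update_of_ne hka]
        exact hxy k (by simp [hk, hka])
    rw [h1, h2]

lemma card_slice {n q : ℕ} (j : Fin n) (c : Fin q) :
    (univ.filter (fun x : Fin n → Fin q => x j = c)).card = q ^ (n - 1) := by
  classical
  rw [← Fintype.card_subtype]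
  have e : {x : Fin n → Fin q // x j = c} ≃ ({k : Fin n // k ≠ j} → Fin q) :=
    { toFun := fun x k => x.1 k.1
      invFun := fun g => ⟨fun k => if h : k = j then c else g ⟨k, h⟩, by simp⟩
      left_inv := by
        rintro ⟨x, hx⟩
        ext k
        by_cases h : k = j
        · subst h; simp [hx]
        · simp [h]
      right_inv := by
        intro g; funext k
        simp [k.2] }
  rw [Fintype.card_congr e, Fintype.card_fun]
  have hcard : Fintype.card {k : Fin n // k ≠ j} = n - 1 := by
    have := Fintype.card_subtype_compl (fun k : Fin n => k = j)
    simpa [Fintype.card_subtype_eq] using this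
  rw [hcard, Fintype.card_fin]

lemma main_lemma {n q : ℕ} (hn : 2 ≤ n) (hq : 2 ≤ q) (h3 : 3 ≤ n ∨ 3 ≤ q)
    (ι : Fin (q ^ (n - 1) + 1) → (Fin n → Fin q)) (hinj : Function.Injective ι)
    (h : (Fin n → Fin q) → (Fin n → Fin q))
    (hcyc : ∀ t, h (ι t) = ι (t + 1))
    (hout : ∀ y, y ∉ Set.range ι → h y = ι 0)
    (i : Fin n) :
    2 ≤ (univ.filter (fun j => Depends h j i)).card := by
  classical
  have hm2 : 2 ≤ q ^ (n - 1) := le_trans hq (Nat.le_self_pow (by omega) q)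
  by_contra hcon
  push_neg at hcon
  have hle1 : (univ.filter (fun j => Depends h j i)).card ≤ 1 := by omega
  obtain ⟨j0, hj0⟩ : ∃ j0 : Fin n, ∀ j : Fin n, j ≠ j0 → ¬ Depends h j i := by
    rcases (univ.filter (fun j => Depends h j i)).eq_empty_or_nonempty with he | ⟨j0, hj0⟩
    · refine ⟨i, fun j _ hd => ?_⟩
      have : j ∈ univ.filter (fun j => Depends h j i) := mem_filter.2 ⟨mem_univ _, hd⟩
      rw [he] at this
      simp at this
    · exact ⟨j0, fun j hne hd =>
        hne (Finset.card_le_one.mp hle1 _ (mem_filter.2 ⟨mem_univ _, hd⟩) _ hj0)⟩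
  have key : ∀ x y : Fin n → Fin q, x j0 = y j0 → h x i = h y i := by
    intro x y hxy
    apply nodep_agree (univ.erase j0) (fun j hj => hj0 j (Finset.ne_of_mem_erase hj))
    intro k hk
    have hkj : k = j0 := by simpa using hk
    rw [hkj]; exact hxy
  set φ : Fin q → Fin q := fun c => h (Function.update (ι 0) j0 c) i with hφdef
  have hφ : ∀ x, h x i = φ (x j0) := by
    intro x
    apply key
    simp
  set a : Fin q := ι 0 i with ha
  have hstep : ∀ t, ι (t + 1) i = φ (ι t j0) := by
    intro t
    rw [← hcyc t]
    exact hφ (ι t)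
  have himg : ∀ c : Fin q, (∀ x : Fin n → Fin q, x j0 = c → x ∈ Set.range ι) ∨ φ c = a := by
    intro c
    by_cases hall : ∀ x : Fin n → Fin q, x j0 = c → x ∈ Set.range ι
    · exact Or.inl hall
    · right
      push_neg at hall
      obtain ⟨y, hyc, hyr⟩ := hall
      have hy := hout y hyr
      calc φ c = φ (y j0) := by rw [hyc]
        _ = h y i := (hφ y).symm
        _ = ι 0 i := by rw [hy]
  -- case: φ is constantly a
  by_cases hex : ∃ c, φ c ≠ a
  swap
  · push_neg at hex
    have hta : ∀ t, ι t i = a := by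
      intro t
      have ht : t = (t - 1) + 1 := (sub_add_cancel t 1).symm
      rw [ht, hstep, hex]
    have hcard : (univ : Finset (Fin (q ^ (n - 1) + 1))).card ≤
        (univ.filter (fun x : Fin n → Fin q => x i = a)).card := by
      apply Finset.card_le_card_of_injOn ι
      · intro t _
        exact mem_filter.2 ⟨mem_univ _, hta t⟩
      · exact hinj.injOn
    rw [card_slice] at hcard
    simp only [card_univ, Fintype.card_fin] at hcard
    omega
  obtain ⟨cs, hcs⟩ := hex
  have hsrange : ∀ x : Fin n → Fin q, x j0 = cs → x ∈ Set.range ι := by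
    rcases himg cs with h1 | h2
    · exact h1
    · exact absurd h2 hcs
  set b : Fin q := φ cs with hb
  have hba : b ≠ a := hcs
  have huniq : ∀ c : Fin q, c ≠ cs → φ c = a := by
    intro c hc
    rcases himg c with hin | hval
    · exfalso
      set R : Finset (Fin n → Fin q) := image ι univ with hR
      have hRcard : R.card ≤ q ^ (n - 1) + 1 := by
        calc R.card ≤ (univ : Finset (Fin (q ^ (n - 1) + 1))).card := card_image_le
          _ = q ^ (n - 1) + 1 := by simp
      have hsub : (univ.filter (fun x : Fin n → Fin q => x j0 = c)) ∪
          (univ.filter (fun x : Fin n → Fin q => x j0 = cs)) ⊆ R := by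
        intro x hx
        rcases mem_union.mp hx with hx | hx
        · obtain ⟨t, ht⟩ := hin x (mem_filter.mp hx).2
          exact mem_image.2 ⟨t, mem_univ _, ht⟩
        · obtain ⟨t, ht⟩ := hsrange x (mem_filter.mp hx).2
          exact mem_image.2 ⟨t, mem_univ _, ht⟩
      have hdisj : Disjoint (univ.filter (fun x : Fin n → Fin q => x j0 = c))
          (univ.filter (fun x : Fin n → Fin q => x j0 = cs)) := by
        rw [Finset.disjoint_left]
        intro x hx1 hx2
        exact hc ((mem_filter.mp hx1).2 ▸ ((mem_filter.mp hx2).2 ▸ rfl : x j0 = cs) ▸ rfl)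
      have := Finset.card_le_card hsub
      rw [Finset.card_union_of_disjoint hdisj, card_slice, card_slice] at this
      omega
    · exact hval
  have hmemab : ∀ t, ι t i = a ∨ ι t i = b := by
    intro t
    have ht : t = (t - 1) + 1 := (sub_add_cancel t 1).symm
    rw [ht, hstep]
    by_cases hc : ι (t - 1) j0 = cs
    · right; rw [hc]
    · left; exact huniq _ hc
  -- index function
  have hidx : ∀ x : Fin n → Fin q, x ∈ Set.range ι → ∃ t, ι t = x := fun x hx => hx
  set idx : (Fin n → Fin q) → Fin (q ^ (n - 1) + 1) :=
    fun x => if hx : ∃ t, ι t = x then hx.choose else 0 with hidxdef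
  have hidx_spec : ∀ x : Fin n → Fin q, x ∈ Set.range ι → ι (idx x) = x := by
    intro x hx
    obtain ⟨t, ht⟩ := hx
    have hex : ∃ t, ι t = x := ⟨t, ht⟩
    simp only [hidxdef, dif_pos hex]
    exact hex.choose_spec
  set Ta : Finset (Fin (q ^ (n - 1) + 1)) := univ.filter (fun t => ι t i = a) with hTa
  set Tb : Finset (Fin (q ^ (n - 1) + 1)) := univ.filter (fun t => ι t i = b) with hTb
  have hTbcard : q ^ (n - 1) ≤ Tb.card := by
    have hmono : (univ.filter (fun x : Fin n → Fin q => x j0 = cs)).card ≤ Tb.card := by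
      apply Finset.card_le_card_of_injOn (fun x => idx x + 1)
      · intro x hx
        have hxc : x j0 = cs := (mem_filter.mp hx).2
        have hxr : x ∈ Set.range ι := hsrange x hxc
        have : ι (idx x + 1) i = b := by
          rw [hstep, hidx_spec x hxr, hxc]
        exact mem_filter.2 ⟨mem_univ _, this⟩
      · intro x hx y hy hxy
        have hxr : x ∈ Set.range ι := hsrange x (by simpa using hx)
        have hyr : y ∈ Set.range ι := hsrange y (by simpa using hy)
        have heq : idx x = idx y := add_right_cancel hxy
        rw [← hidx_spec x hxr, ← hidx_spec y hyr, heq]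
    rwa [card_slice] at hmono
  have hdisjT : Disjoint Ta Tb := by
    rw [Finset.disjoint_left]
    intro t ht1 ht2
    exact hba (((mem_filter.mp ht2).2).symm.trans (mem_filter.mp ht1).2)
  have hTacard : Ta.card ≤ 1 := by
    have hun : (Ta ∪ Tb).card ≤ q ^ (n - 1) + 1 := by
      calc (Ta ∪ Tb).card ≤ (univ : Finset (Fin (q ^ (n - 1) + 1))).card :=
            card_le_card (subset_univ _)
        _ = q ^ (n - 1) + 1 := by simp
    rw [Finset.card_union_of_disjoint hdisjT] at hun
    omega
  have h0Ta : (0 : Fin (q ^ (n - 1) + 1)) ∈ Ta := mem_filter.2 ⟨mem_univ _, rfl⟩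
  have hTa_unique : ∀ t, ι t i = a → t = 0 := by
    intro t ht
    exact Finset.card_le_one.mp hTacard t (mem_filter.2 ⟨mem_univ _, ht⟩) 0 h0Ta
  -- final step: two distinct points in slice j0 = cs with i-coordinate ≠ b give contradiction
  have final : ∀ x1 x2 : Fin n → Fin q, x1 j0 = cs → x2 j0 = cs →
      x1 i ≠ b → x2 i ≠ b → x1 = x2 := by
    intro x1 x2 hc1 hc2 hb1 hb2
    obtain ⟨t1, ht1⟩ := hsrange x1 hc1
    obtain ⟨t2, ht2⟩ := hsrange x2 hc2
    have ha1 : ι t1 i = a := by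
      rcases hmemab t1 with h' | h'
      · exact h'
      · exact absurd (ht1 ▸ h') hb1
    have ha2 : ι t2 i = a := by
      rcases hmemab t2 with h' | h'
      · exact h'
      · exact absurd (ht2 ▸ h') hb2
    rw [← ht1, ← ht2, hTa_unique t1 ha1, hTa_unique t2 ha2]
  have hq0 : 0 < q := by omega
  set z0 : Fin q := ⟨0, hq0⟩ with hz0
  set z1 : Fin q := ⟨1, by omega⟩ with hz1
  set base : Fin n → Fin q := fun _ => z0 with hbase
  by_cases hji : j0 = i
  · -- j0 = i case
    subst hji
    have hcsab : cs = a ∨ cs = b := by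
      have hx : (Function.update base j0 cs) ∈ Set.range ι :=
        hsrange _ (by simp)
      obtain ⟨t, ht⟩ := hx
      have : ι t j0 = cs := by rw [ht]; simp
      rcases hmemab t with h' | h'
      · left; rw [← this, h']
      · right; rw [← this, h']
    rcases hcsab with hca | hcb
    · -- cs = a : two distinct points with coordinate j0 = a
      obtain ⟨k, hk⟩ : ∃ k : Fin n, k ≠ j0 := by
        have : 1 < Fintype.card (Fin n) := by simp; omega
        exact Fintype.exists_ne_of_one_lt_card this j0
      have h01 : z0 ≠ z1 := by
        simp [hz0, hz1, Fin.ext_iff]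
      set x1 : Fin n → Fin q := Function.update base j0 cs with hx1
      set x2 : Fin n → Fin q := Function.update (Function.update base k z1) j0 cs with hx2
      have hceq : x1 = x2 := by
        apply final
        · simp [hx1]
        · simp [hx2]
        · simp only [hx1, Function.update_self]
          rw [hca]; exact hba.symm
        · simp only [hx2, Function.update_self]
          rw [hca]; exact hba.symm
      have : x1 k = x2 k := by rw [hceq]
      rw [hx1, hx2, Function.update_of_ne hk, Function.update_of_ne hk,
        Function.update_self] at this
      exact h01 (by simpa [hbase] using this)
    · -- cs = b : coordinate j0 constant along cycle
      have hfa : φ a = a := huniq a (fun hac => hba (hac.trans hcb).symm)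
      open Fin.NatCast in
      have hcl : ∀ k : ℕ, ι (k : Fin (q ^ (n - 1) + 1)) j0 = a := by
        intro k
        induction k with
        | zero => simpa using ha.symm
        | succ k ih =>
          have hcast : ((k + 1 : ℕ) : Fin (q ^ (n - 1) + 1)) =
              (k : Fin (q ^ (n - 1) + 1)) + 1 := by push_cast; ring
          rw [hcast, hstep, ih, hfa]
      have hne : Tb.Nonempty := by
        apply Finset.card_pos.mp
        omega
      obtain ⟨t, htb⟩ := hne
      have h1 : ι t j0 = b := (mem_filter.mp htb).2
      have h2 : ι t j0 = a := by
        have := hcl t.val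
        rwa [Fin.cast_val_eq_self] at this
      exact hba (h1 ▸ h2 ▸ rfl)
  · -- j0 ≠ i case
    have hij : i ≠ j0 := fun hc => hji hc.symm
    rcases h3 with hn3 | hq3
    · -- n ≥ 3 : vary a third coordinate
      obtain ⟨k, hki, hkj⟩ : ∃ k : Fin n, k ≠ i ∧ k ≠ j0 := by
        have hsub : ({i, j0} : Finset (Fin n)) ⊆ univ := subset_univ _
        have hcard2 : ({i, j0} : Finset (Fin n)).card ≤ 2 :=
          (Finset.card_insert_le _ _).trans (by simp)
        have : 0 < ((univ : Finset (Fin n)) \ {i, j0}).card := by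
          rw [Finset.card_sdiff_of_subset hsub]
          simp only [card_univ, Fintype.card_fin]
          omega
        obtain ⟨k, hk⟩ := Finset.card_pos.mp this
        rw [mem_sdiff, mem_insert, mem_singleton] at hk
        exact ⟨k, fun h' => hk.2 (Or.inl h'), fun h' => hk.2 (Or.inr h')⟩
      set v : Fin q := if b = z0 then z1 else z0 with hv
      have hvb : v ≠ b := by
        rw [hv]
        split
        · rename_i h'; rw [h']; simp [hz0, hz1, Fin.ext_iff]
        · rename_i h'; exact fun hc => h' hc.symm
      set x1 : Fin n → Fin q :=
        Function.update (Function.update (Function.update base k z0) j0 cs) i v with hx1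
      set x2 : Fin n → Fin q :=
        Function.update (Function.update (Function.update base k z1) j0 cs) i v with hx2
      have hceq : x1 = x2 := by
        apply final
        · rw [hx1, Function.update_of_ne (Ne.symm hij), Function.update_self]
        · rw [hx2, Function.update_of_ne (Ne.symm hij), Function.update_self]
        · rw [hx1, Function.update_self]; exact hvb
        · rw [hx2, Function.update_self]; exact hvb
      have : x1 k = x2 k := by rw [hceq]
      rw [hx1, hx2, Function.update_of_ne hki, Function.update_of_ne hki,
        Function.update_of_ne hkj, Function.update_of_ne hkj,
        Function.update_self, Function.update_self] at this
      exact (by simp [hz0, hz1, Fin.ext_iff] : z0 ≠ z1) this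
    · -- q ≥ 3 : two values ≠ b
      obtain ⟨v1, hv1, v2, hv2, hv12⟩ :
          ∃ v1 ∈ (univ : Finset (Fin q)) \ {b}, ∃ v2 ∈ (univ : Finset (Fin q)) \ {b}, v1 ≠ v2 := by
        apply Finset.one_lt_card.mp
        rw [Finset.card_sdiff_of_subset (subset_univ _)]
        simp only [card_univ, Fintype.card_fin, card_singleton]
        omega
      have hv1b : v1 ≠ b := by simpa using (mem_sdiff.mp hv1).2
      have hv2b : v2 ≠ b := by simpa using (mem_sdiff.mp hv2).2
      set x1 : Fin n → Fin q := Function.update (Function.update base j0 cs) i v1 with hx1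
      set x2 : Fin n → Fin q := Function.update (Function.update base j0 cs) i v2 with hx2
      have hceq : x1 = x2 := by
        apply final
        · rw [hx1, Function.update_of_ne (Ne.symm hij), Function.update_self]
        · rw [hx2, Function.update_of_ne (Ne.symm hij), Function.update_self]
        · rw [hx1, Function.update_self]; exact hv1b
        · rw [hx2, Function.update_self]; exact hv2b
      have : x1 i = x2 i := by rw [hceq]
      rw [hx1, hx2, Function.update_self, Function.update_self] at this
      exact hv12 this

theorem min_indegree_two_exists {n q : ℕ} (hn : 2 ≤ n) (hq : 2 ≤ q)
    (h : 3 ≤ n ∨ 3 ≤ q) :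
    ∃ f : (Fin n → Fin q) → (Fin n → Fin q),
      ∀ π : Equiv.Perm (Fin n → Fin q), ∀ i : Fin n,
        2 ≤ (univ.filter (fun j => Depends (fun y => π (f (π.symm y))) j i)).card := by
  classical
  have hm2 : 2 ≤ q ^ (n - 1) := le_trans hq (Nat.le_self_pow (by omega) q)
  have hle : q ^ (n - 1) + 1 ≤ q ^ n := by
    have hpow : q ^ n = q ^ (n - 1) * q := by
      rw [← pow_succ]
      congr 1
      omega
    have hmul : q ^ (n - 1) * 2 ≤ q ^ (n - 1) * q := Nat.mul_le_mul_left _ hq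
    omega
  have hcard : q ^ (n - 1) + 1 ≤ Fintype.card (Fin n → Fin q) := by
    rw [Fintype.card_fun, Fintype.card_fin, Fintype.card_fin]
    exact hle
  set e := Fintype.equivFin (Fin n → Fin q) with he
  set ι0 : Fin (q ^ (n - 1) + 1) → (Fin n → Fin q) :=
    fun t => e.symm (Fin.castLE hcard t) with hι0
  have hinj0 : Function.Injective ι0 :=
    e.symm.injective.comp (Fin.castLE_injective hcard)
  set f : (Fin n → Fin q) → (Fin n → Fin q) :=
    fun x => if hx : ∃ t, ι0 t = x then ι0 (hx.choose + 1) else ι0 0 with hf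
  have hcyc0 : ∀ t, f (ι0 t) = ι0 (t + 1) := by
    intro t
    have hex : ∃ s, ι0 s = ι0 t := ⟨t, rfl⟩
    rw [hf]
    simp only [dif_pos hex]
    congr 1
    have := hex.choose_spec
    have : hex.choose = t := hinj0 this
    rw [this]
  have hout0 : ∀ y, y ∉ Set.range ι0 → f y = ι0 0 := by
    intro y hy
    have : ¬ ∃ t, ι0 t = y := fun ⟨t, ht⟩ => hy ⟨t, ht⟩
    rw [hf]
    simp only [dif_neg this]
  refine ⟨f, fun π i => ?_⟩
  apply main_lemma hn hq h (fun t => π (ι0 t))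
    (π.injective.comp hinj0)
  · intro t
    simp only [Equiv.symm_apply_apply]
    rw [hcyc0]
  · intro y hy
    have hy' : π.symm y ∉ Set.range ι0 := by
      intro ⟨t, ht⟩
      exact hy ⟨t, by show π (ι0 t) = y; rw [ht]; simp⟩
    rw [hout0 _ hy']
end

section
/- Let f : Q^n → Q^n with image set X, and let k ∈ [n]. Suppose that for every non-empty strict subset Y of X, |f^{-1}(Y)| is not a multiple of q^k. Then every vertex of G(f) with in-degree at least 1 has strict in-degree at least n - k. -/
open Finset
open scoped Classical

private lemma depends_aux {n q : ℕ} (f : (Fin n → Fin q) → (Fin n → Fin q)) (i : Fin n) :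
    ∀ (D : Finset (Fin n)) (x y : Fin n → Fin q),
      (∀ j, x j ≠ y j → j ∈ D) → (∀ j ∈ D, ¬ Depends f j i) → f x i = f y i := by
  intro D
  induction D using Finset.induction_on with
  | empty =>
    intro x y h1 _
    have : x = y := by
      funext j
      by_contra h
      exact Finset.notMem_empty j (h1 j h)
    rw [this]
  | @insert a D ha ih =>
    intro x y h1 h2
    set z := Function.update x a (y a) with hz
    have hxz : f x i = f z i := by
      by_contra hne
      exact h2 a (Finset.mem_insert_self a D)
        ⟨x, z, fun kk hkk => by simp [hz, Function.update_of_ne hkk], hne⟩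
    have hzy : f z i = f y i := by
      apply ih
      · intro j hj
        have hja : j ≠ a := by
          intro h; apply hj; simp [hz, h]
        have : z j = x j := by simp [hz, Function.update_of_ne hja]
        have := h1 j (by rw [← this]; exact hj)
        rcases Finset.mem_insert.mp this with h | h
        · exact absurd h hja
        · exact h
      · intro j hj; exact h2 j (Finset.mem_insert_of_mem hj)
    rw [hxz, hzy]

private lemma key_dvd {n q : ℕ} (f : (Fin n → Fin q) → (Fin n → Fin q)) (i : Fin n)
    (S : Finset (Fin n))
    (hS : ∀ x y : Fin n → Fin q, (∀ j ∈ S, x j = y j) → f x i = f y i) (a : Fin q) :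
    q ^ (n - S.card) ∣ (univ.filter (fun x => f x i = a)).card := by
  set e := Equiv.piEquivPiSubtypeProd (fun j : Fin n => j ∈ S) (fun _ => Fin q) with he
  have hcard : (univ.filter (fun x => f x i = a)).card =
      (univ.filter (fun z : (∀ _ : {j : Fin n // j ∈ S}, Fin q) ×
        (∀ _ : {j : Fin n // ¬ j ∈ S}, Fin q) => f (e.symm z) i = a)).card := by
    apply Finset.card_bij' (fun x _ => e x) (fun z _ => e.symm z)
    · intro x hx
      simp only [Finset.mem_filter, Finset.mem_univ, true_and] at hx ⊢
      rw [e.symm_apply_apply]; exact hx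
    · intro z hz
      simp only [Finset.mem_filter, Finset.mem_univ, true_and] at hz ⊢
      exact hz
    · intro x _; exact e.symm_apply_apply x
    · intro z _; exact e.apply_symm_apply z
  -- the predicate only depends on the first component
  have hfst : ∀ (s : ∀ _ : {j : Fin n // j ∈ S}, Fin q)
      (t t' : ∀ _ : {j : Fin n // ¬ j ∈ S}, Fin q),
      f (e.symm (s, t)) i = f (e.symm (s, t')) i := by
    intro s t t'
    apply hS
    intro j hj
    simp [he, Equiv.piEquivPiSubtypeProd, dif_pos hj]
  have t0 : ∀ _ : {j : Fin n // ¬ j ∈ S}, Fin q := fun _ => a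
  have hprod : (univ.filter (fun z : (∀ _ : {j : Fin n // j ∈ S}, Fin q) ×
        (∀ _ : {j : Fin n // ¬ j ∈ S}, Fin q) => f (e.symm z) i = a)) =
      (univ.filter (fun s => f (e.symm (s, t0)) i = a)) ×ˢ univ := by
    ext z
    simp only [Finset.mem_filter, Finset.mem_univ, true_and, Finset.mem_product, and_true]
    constructor
    · intro h; rw [← h]; exact (hfst z.1 t0 z.2).symm ▸ (hfst z.1 z.2 t0).symm
    · intro h; rw [← h]; exact hfst z.1 z.2 t0
  rw [hcard, hprod, Finset.card_product]
  have : (univ : Finset (∀ _ : {j : Fin n // ¬ j ∈ S}, Fin q)).card = q ^ (n - S.card) := by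
    rw [Finset.card_univ]
    rw [Fintype.card_pi]
    simp only [Fintype.card_fin, Finset.prod_const, Finset.card_univ]
    congr 1
    rw [Fintype.card_subtype_compl, Fintype.card_coe, Fintype.card_fin]
  rw [this]
  exact dvd_mul_left _ _

theorem nonsource_large_strict_indegree {n q k : ℕ} (hk : 1 ≤ k) (hkn : k ≤ n)
    (f : (Fin n → Fin q) → (Fin n → Fin q))
    (hY : ∀ Y ⊆ Finset.univ.image f, Y.Nonempty → Y ≠ Finset.univ.image f →
      ¬ q ^ k ∣ (univ.filter (fun x => f x ∈ Y)).card) :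
    ∀ i : Fin n, (∃ j, Depends f j i) →
      n - k ≤ (univ.filter (fun j => j ≠ i ∧ Depends f j i)).card := by
  intro i hdep
  by_contra hlt
  push_neg at hlt
  obtain ⟨j0, x0, y0, hagree, hne⟩ := hdep
  set S := univ.filter (fun j => Depends f j i) with hSdef
  have hSsub : S ⊆ insert i (univ.filter (fun j => j ≠ i ∧ Depends f j i)) := by
    intro j hj
    simp only [hSdef, Finset.mem_filter, Finset.mem_univ, true_and] at hj
    by_cases hji : j = i
    · exact Finset.mem_insert.mpr (Or.inl hji)
    · exact Finset.mem_insert_of_mem (by simp [hji, hj])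
  have hScard : S.card ≤ n - k := by
    calc S.card ≤ (insert i (univ.filter (fun j => j ≠ i ∧ Depends f j i))).card :=
          Finset.card_le_card hSsub
      _ ≤ (univ.filter (fun j => j ≠ i ∧ Depends f j i)).card + 1 :=
          Finset.card_insert_le _ _
      _ ≤ n - k := by omega
  have hkle : k ≤ n - S.card := by omega
  have hS : ∀ x y : Fin n → Fin q, (∀ j ∈ S, x j = y j) → f x i = f y i := by
    intro x y h
    apply depends_aux f i (univ.filter (fun j => ¬ Depends f j i))
    · intro j hj
      simp only [Finset.mem_filter, Finset.mem_univ, true_and]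
      intro hd
      exact hj (h j (by simp [hSdef, hd]))
    · intro j hj
      simpa using (Finset.mem_filter.mp hj).2
  set a := f x0 i with ha
  set Y := (univ.image f).filter (fun z => z i = a) with hYdef
  have hYsub : Y ⊆ univ.image f := Finset.filter_subset _ _
  have hYne : Y.Nonempty := ⟨f x0, by simp [hYdef, ha]⟩
  have hYproper : Y ≠ univ.image f := by
    intro h
    have : f y0 ∈ Y := h ▸ (Finset.mem_image.mpr ⟨y0, Finset.mem_univ _, rfl⟩)
    simp only [hYdef, Finset.mem_filter] at this
    exact hne this.2.symm
  have heq : (univ.filter (fun x => f x ∈ Y)) = (univ.filter (fun x => f x i = a)) := by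
    ext x
    simp [hYdef, Finset.mem_image]
  apply hY Y hYsub hYne hYproper
  rw [heq]
  exact dvd_trans (pow_dvd_pow q hkle) (key_dvd f i S hS a)
end

section
/- For all n, q ≥ 2 and every k ∈ [n], there exists f : Q^n → Q^n such that every digraph in 𝔾(f) has at least k vertices of in-degree ≥ 1, and each such vertex has strict in-degree at least n - k. Concretely, one may take f which fixes a chosen set X of q^k configurations pointwise and maps everything else to a fixed x* ∈ X. -/
open Finset
open scoped Classical

/-- If f x i ≠ f y i then f depends on some coordinate at output i. -/
lemma exists_depends_of_apply_ne {n q : ℕ} (f : (Fin n → Fin q) → (Fin n → Fin q)) (i : Fin n) :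
    ∀ d (x y : Fin n → Fin q), (univ.filter (fun j => x j ≠ y j)).card ≤ d →
      f x i ≠ f y i → ∃ j, Depends f j i := by
  intro d
  induction d with
  | zero =>
    intro x y hc hne
    have hxy : x = y := by
      funext j
      by_contra hj
      have hm : j ∈ univ.filter (fun j => x j ≠ y j) := by simp [hj]
      have := Finset.card_pos.mpr ⟨j, hm⟩
      omega
    exact absurd (by rw [hxy]) hne
  | succ d ih =>
    intro x y hc hne
    by_cases hxy : x = y
    · exact absurd (by rw [hxy]) hne
    obtain ⟨j, hj⟩ := Function.ne_iff.mp hxy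
    set x' := Function.update x j (y j) with hx'
    by_cases h1 : f x i = f x' i
    · have hsub : (univ.filter (fun m => x' m ≠ y m)) ⊂ (univ.filter (fun m => x m ≠ y m)) := by
        constructor
        · intro m hm
          simp only [mem_filter, mem_univ, true_and] at hm ⊢
          intro hxm
          apply hm
          rcases eq_or_ne m j with rfl | hmj
          · simp [hx']
          · rw [hx', Function.update_of_ne hmj]; exact hxm
        · intro hsub'
          have hjmem : j ∈ univ.filter (fun m => x m ≠ y m) := by simp [hj]
          have := hsub' hjmem
          simp only [mem_filter, mem_univ, true_and, hx'] at this
          exact this (by simp)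
      have hcard : (univ.filter (fun m => x' m ≠ y m)).card ≤ d := by
        have := Finset.card_lt_card hsub
        omega
      exact ih x' y hcard (by rw [← h1]; exact hne)
    · refine ⟨j, x, x', fun m hm => ?_, h1⟩
      rw [hx', Function.update_of_ne hm]

/-- Characterization of non-sources for `g x = if x ∈ Y then x else ystar`. -/
lemma depends_iff {n q : ℕ} (Y : Finset (Fin n → Fin q)) (ystar : Fin n → Fin q)
    (hy : ystar ∈ Y) (i : Fin n) :
    (∃ j, Depends (fun x => if x ∈ Y then x else ystar) j i) ↔
      ∃ x ∈ Y, x i ≠ ystar i := by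
  set g : (Fin n → Fin q) → (Fin n → Fin q) := fun x => if x ∈ Y then x else ystar with hg
  constructor
  · rintro ⟨j, x, y, hxy, hne⟩
    by_cases hx : x ∈ Y <;> by_cases hyy : y ∈ Y <;>
      simp only [hg, hx, hyy, if_pos, if_neg, if_true, if_false] at hne
    · rcases eq_or_ne (x i) (ystar i) with h | h
      · exact ⟨y, hyy, fun hc => hne (h.trans hc.symm)⟩
      · exact ⟨x, hx, h⟩
    · exact ⟨x, hx, hne⟩
    · exact ⟨y, hyy, fun hc => hne hc.symm⟩
    · exact absurd rfl hne
  · rintro ⟨x, hx, hne⟩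
    refine exists_depends_of_apply_ne g i n x ystar ?_ ?_
    · simpa using Finset.card_le_univ (univ.filter (fun j => x j ≠ ystar j))
    · simp only [hg, hx, hy, if_pos]
      exact hne

/-- Closure: points agreeing with a witness outside the non-dependency set stay in Y. -/
lemma closure_lemma {n q : ℕ} (Y : Finset (Fin n → Fin q)) (ystar : Fin n → Fin q)
    (i : Fin n) :
    ∀ d (x z : Fin n → Fin q), x ∈ Y → x i ≠ ystar i →
      (∀ j : Fin n, (j = i ∨ Depends (fun x => if x ∈ Y then x else ystar) j i) → z j = x j) →
      (univ.filter (fun j => z j ≠ x j)).card ≤ d → z ∈ Y := by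
  set g : (Fin n → Fin q) → (Fin n → Fin q) := fun x => if x ∈ Y then x else ystar with hg
  intro d
  induction d with
  | zero =>
    intro x z hxY hxi hagree hc
    have hxz : z = x := by
      funext j
      by_contra hj
      have hm : j ∈ univ.filter (fun j => z j ≠ x j) := by simp [hj]
      have := Finset.card_pos.mpr ⟨j, hm⟩
      omega
    rw [hxz]; exact hxY
  | succ d ih =>
    intro x z hxY hxi hagree hc
    by_cases hxz : z = x
    · rw [hxz]; exact hxY
    obtain ⟨j, hj⟩ := Function.ne_iff.mp hxz
    have hjA : j ≠ i ∧ ¬ Depends g j i := by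
      by_contra hcon
      push_neg at hcon
      rcases eq_or_ne j i with rfl | hji
      · exact hj (hagree j (Or.inl rfl))
      · exact hj (hagree j (Or.inr (hcon hji)))
    set x' := Function.update x j (z j) with hx'
    have hdiff : ∀ m, m ≠ j → x m = x' m := fun m hm => (Function.update_of_ne hm _ _).symm
    have hgeq : g x i = g x' i := by
      by_contra hne
      exact hjA.2 ⟨x, x', hdiff, hne⟩
    have hgx : g x i = x i := by simp [hg, hxY]
    have hx'Y : x' ∈ Y := by
      by_contra hx'Y
      have : g x' i = ystar i := by simp [hg, hx'Y]
      rw [this, hgx] at hgeq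
      exact hxi hgeq
    have hx'i : x' i ≠ ystar i := by
      rw [hx']
      rw [Function.update_of_ne (Ne.symm hjA.1)]
      exact hxi
    have hagree' : ∀ m : Fin n, (m = i ∨ Depends g m i) → z m = x' m := by
      intro m hm
      have hmj : m ≠ j := by
        rintro rfl
        rcases hm with rfl | hm
        · exact hjA.1 rfl
        · exact hjA.2 hm
      rw [hx', Function.update_of_ne hmj]
      exact hagree m hm
    have hsub : (univ.filter (fun m => z m ≠ x' m)) ⊂ (univ.filter (fun m => z m ≠ x m)) := by
      constructor
      · intro m hm
        simp only [mem_filter, mem_univ, true_and] at hm ⊢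
        rcases eq_or_ne m j with rfl | hmj
        · simp [hx'] at hm
        · rw [hx', Function.update_of_ne hmj] at hm; exact hm
      · intro hsub'
        have hjm : j ∈ univ.filter (fun m => z m ≠ x m) := by simp [hj]
        have := hsub' hjm
        simp only [mem_filter, mem_univ, true_and, hx'] at this
        exact this (by simp)
    exact ih x' z hx'Y hx'i hagree' (by have := Finset.card_lt_card hsub; omega)

/-- Main general lemma for networks of the form `x ↦ if x ∈ Y then x else ystar`. -/
lemma main_general {n q k : ℕ} (hq : 2 ≤ q) (hk : 1 ≤ k) (hkn : k ≤ n)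
    (Y : Finset (Fin n → Fin q)) (ystar : Fin n → Fin q) (hy : ystar ∈ Y)
    (hcard : Y.card = q ^ k) :
    (k ≤ (univ.filter (fun i : Fin n =>
        ∃ j, Depends (fun x => if x ∈ Y then x else ystar) j i)).card) ∧
    (∀ i : Fin n, (∃ j, Depends (fun x => if x ∈ Y then x else ystar) j i) →
      n - k ≤ (univ.filter (fun j : Fin n => j ≠ i ∧
        Depends (fun x => if x ∈ Y then x else ystar) j i)).card) := by
  set g : (Fin n → Fin q) → (Fin n → Fin q) := fun x => if x ∈ Y then x else ystar with hg
  constructor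
  · -- at least k non-sources
    set B : Finset (Fin n) := univ.filter (fun i => ∃ x ∈ Y, x i ≠ ystar i) with hB
    have hBeq : (univ.filter (fun i : Fin n => ∃ j, Depends g j i)) = B := by
      apply Finset.filter_congr
      intro i _
      simpa using depends_iff Y ystar hy i
    rw [hBeq]
    -- injection from Y into functions on B
    have hinj : ∀ x ∈ Y, ∀ y ∈ Y, (fun j : ↥B => x j) = (fun j : ↥B => y j) → x = y := by
      intro x hx y hyy heq
      funext j
      by_cases hjB : j ∈ B
      · exact congrFun heq ⟨j, hjB⟩
      · simp only [hB, mem_filter, mem_univ, true_and, not_exists] at hjB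
        push_neg at hjB
        rw [hjB x hx, hjB y hyy]
    have hle : Y.card ≤ q ^ B.card := by
      have := Finset.card_le_card_of_injOn (fun x => (fun j : ↥B => x j))
        (fun x _ => Finset.mem_univ _) (fun x hx y hyy => hinj x hx y hyy)
      calc Y.card ≤ (Finset.univ : Finset (↥B → Fin q)).card := this
        _ = q ^ B.card := by
            rw [Finset.card_univ]
            simp [Fintype.card_fun]
    rw [hcard] at hle
    exact (Nat.pow_le_pow_iff_right (by omega : 1 < q)).mp hle
  · -- strict in-degree at least n - k
    intro i hi
    rw [depends_iff Y ystar hy i] at hi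
    obtain ⟨x0, hx0Y, hx0i⟩ := hi
    set A : Finset (Fin n) := univ.filter (fun j => j ≠ i ∧ ¬ Depends g j i) with hA
    have hAcard : A.card < k := by
      by_contra hAk
      push_neg at hAk
      -- map (↥A → Fin q) into Y \ {ystar}
      set φ : (↥A → Fin q) → (Fin n → Fin q) :=
        fun w => fun j => if h : j ∈ A then w ⟨j, h⟩ else x0 j with hφ
      have hiA : i ∉ A := by simp [hA]
      have hφY : ∀ w, φ w ∈ Y := by
        intro w
        apply closure_lemma Y ystar i n x0 (φ w) hx0Y hx0i
        · intro j hjdep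
          have hjA : j ∉ A := by
            simp only [hA, mem_filter, mem_univ, true_and, not_and, not_not]
            intro hji
            rcases hjdep with rfl | h
            · exact absurd rfl hji
            · exact h
          simp [hφ, hjA]
        · calc (univ.filter (fun j => φ w j ≠ x0 j)).card ≤ (univ : Finset (Fin n)).card :=
                Finset.card_le_card (Finset.subset_univ _)
            _ = n := by simp
      have hφi : ∀ w, φ w i = x0 i := by intro w; simp [hφ, hiA]
      have hφmem : ∀ w, φ w ∈ Y.erase ystar := by
        intro w
        refine Finset.mem_erase.mpr ⟨?_, hφY w⟩
        intro hcon
        apply hx0i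
        rw [← hφi w, hcon]
      have hφinj : ∀ w₁ w₂ : (↥A → Fin q), φ w₁ = φ w₂ → w₁ = w₂ := by
        intro w₁ w₂ heq
        funext j
        have := congrFun heq j
        simpa [hφ, j.2] using this
      have hle : q ^ A.card ≤ (Y.erase ystar).card := by
        have := Finset.card_le_card_of_injOn (s := (Finset.univ : Finset (↥A → Fin q)))
          (t := Y.erase ystar) φ (fun w _ => hφmem w)
          (fun w₁ _ w₂ _ h => hφinj w₁ w₂ h)
        calc q ^ A.card = (Finset.univ : Finset (↥A → Fin q)).card := by
              rw [Finset.card_univ]; simp [Fintype.card_fun]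
          _ ≤ (Y.erase ystar).card := this
      have hYe : (Y.erase ystar).card = q ^ k - 1 := by
        rw [Finset.card_erase_of_mem hy, hcard]
      have h1 : q ^ k ≤ q ^ A.card := Nat.pow_le_pow_right (by omega) hAk
      have h2 : 1 ≤ q ^ k := Nat.one_le_pow _ _ (by omega)
      omega
    -- now card arithmetic
    have hpart : (univ.filter (fun j : Fin n => j ≠ i ∧ Depends g j i)).card + A.card = n - 1 := by
      have h1 : ((univ.filter (fun j : Fin n => j ≠ i)).filter (fun j => Depends g j i)).card
          + ((univ.filter (fun j : Fin n => j ≠ i)).filter (fun j => ¬ Depends g j i)).card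
          = (univ.filter (fun j : Fin n => j ≠ i)).card :=
        Finset.card_filter_add_card_filter_not _
      rw [Finset.filter_filter, Finset.filter_filter] at h1
      have h2 : (univ.filter (fun j : Fin n => j ≠ i)).card = n - 1 := by
        rw [Finset.filter_ne', Finset.card_erase_of_mem (Finset.mem_univ _)]
        simp
      rw [h2] at h1
      convert h1 using 2
    omega

theorem k_nonsources_exists {n q : ℕ} (hn : 2 ≤ n) (hq : 2 ≤ q)
    (k : ℕ) (hk : 1 ≤ k) (hkn : k ≤ n) :
    ∃ f : (Fin n → Fin q) → (Fin n → Fin q),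
      ∀ π : Equiv.Perm (Fin n → Fin q),
        (k ≤ (univ.filter (fun i : Fin n =>
          ∃ j, Depends (fun y => π (f (π.symm y))) j i)).card) ∧
        (∀ i : Fin n, (∃ j, Depends (fun y => π (f (π.symm y))) j i) →
          n - k ≤ (univ.filter (fun j => j ≠ i ∧
            Depends (fun y => π (f (π.symm y))) j i)).card) := by
  have hq0 : 0 < q := by omega
  set x0 : Fin n → Fin q := fun _ => ⟨0, hq0⟩ with hx0
  set ext : (Fin k → Fin q) → (Fin n → Fin q) :=
    fun w => fun i => if h : (i : ℕ) < k then w ⟨i, h⟩ else ⟨0, hq0⟩ with hext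
  have hextinj : Function.Injective ext := by
    intro w₁ w₂ heq
    funext j
    have hjk : (j : ℕ) < n := lt_of_lt_of_le j.2 hkn
    have := congrFun heq ⟨j, hjk⟩
    simpa [hext, j.2] using this
  set X : Finset (Fin n → Fin q) := Finset.image ext Finset.univ with hX
  have hXcard : X.card = q ^ k := by
    rw [hX, Finset.card_image_of_injective _ hextinj, Finset.card_univ]
    simp [Fintype.card_fun]
  have hx0X : x0 ∈ X := by
    rw [hX, Finset.mem_image]
    exact ⟨fun _ => ⟨0, hq0⟩, Finset.mem_univ _, by funext i; simp [hext, hx0]⟩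
  refine ⟨fun x => if x ∈ X then x else x0, fun π => ?_⟩
  set Y : Finset (Fin n → Fin q) := X.image π with hY
  have hfeq : (fun y => π ((fun x => if x ∈ X then x else x0) (π.symm y)))
      = (fun x => if x ∈ Y then x else π x0) := by
    funext y
    by_cases h : π.symm y ∈ X
    · have : y ∈ Y := by
        rw [hY, Finset.mem_image]
        exact ⟨π.symm y, h, by simp⟩
      simp [h, this]
    · have : y ∉ Y := by
        rw [hY, Finset.mem_image]
        rintro ⟨x, hx, rfl⟩
        rw [Equiv.symm_apply_apply] at h
        exact h hx
      simp [h, this]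
  rw [hfeq]
  apply main_general hq hk hkn Y (π x0)
  · rw [hY, Finset.mem_image]; exact ⟨x0, hx0X, rfl⟩
  · rw [hY, Finset.card_image_of_injective _ π.injective, hXcard]
end

section
/- For all n, q ≥ 2, there exists f : Q^n → Q^n such that every digraph in 𝔾(f) has at least ⌊n²/4⌋ arcs. -/
open Finset
open scoped Classical

lemma card_filter_equiv {α β : Type*} [Fintype α] [Fintype β] (σ : α ≃ β) (p : β → Prop)
    [DecidablePred p] [DecidablePred fun x => p (σ x)] :
    (univ.filter fun x => p (σ x)).card = (univ.filter p).card := by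
  classical
  have : (univ.filter fun x => p (σ x)) = (univ.filter p).map σ.symm.toEmbedding := by
    ext x
    simp [Equiv.symm_apply_eq, eq_comm]
  rw [this, Finset.card_map]

lemma cylinder_card {n q : ℕ} (S : Finset (Fin n)) (z : Fin n → Fin q)
    [DecidablePred fun x : Fin n → Fin q => ∀ j ∈ S, x j = z j] :
    (univ.filter fun x : Fin n → Fin q => ∀ j ∈ S, x j = z j).card = q ^ (n - S.card) := by
  classical
  have h1 : (univ.filter fun x : Fin n → Fin q => ∀ j ∈ S, x j = z j)
      = Fintype.piFinset (fun j => if j ∈ S then {z j} else Finset.univ) := by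
    ext x
    simp only [mem_filter, mem_univ, true_and, Fintype.mem_piFinset]
    constructor
    · intro hx j
      by_cases hj : j ∈ S <;> simp [hj, hx]
    · intro hx j hj
      have := hx j
      simpa [hj] using this
  rw [h1, Fintype.card_piFinset]
  have h2 : ∀ j : Fin n, (if j ∈ S then ({z j} : Finset (Fin q)) else Finset.univ).card
      = if j ∈ S then 1 else q := by
    intro j; by_cases hj : j ∈ S <;> simp [hj]
  rw [Finset.prod_congr rfl fun j _ => h2 j]
  rw [← Finset.prod_mul_prod_compl S]
  have h3 : ∏ j ∈ S, (if j ∈ S then 1 else q) = 1 :=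
    Finset.prod_eq_one fun j hj => by simp [hj]
  have h4 : ∏ j ∈ Sᶜ, (if j ∈ S then 1 else q) = q ^ (n - S.card) := by
    have h5 : ∀ j ∈ Sᶜ, (if j ∈ S then 1 else q) = q := fun j hj => by
      simp [Finset.mem_compl.mp hj]
    rw [Finset.prod_congr rfl h5, Finset.prod_const, Finset.card_compl, Fintype.card_fin]
  rw [h3, h4, one_mul]


lemma depends_det {n q : ℕ} {f : (Fin n → Fin q) → (Fin n → Fin q)} (i : Fin n) :
    ∀ (N : ℕ) (x y : Fin n → Fin q),
      (univ.filter fun j => x j ≠ y j).card ≤ N →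
      (∀ j, Depends f j i → x j = y j) → f x i = f y i := by
  intro N
  induction N with
  | zero =>
    intro x y hc hag
    have hxy : x = y := by
      funext j
      by_contra hj
      have hmem : j ∈ univ.filter fun j => x j ≠ y j := by simp [hj]
      have := Finset.card_pos.mpr ⟨j, hmem⟩
      omega
    rw [hxy]
  | succ N ih =>
    intro x y hc hag
    by_cases hxy : x = y
    · rw [hxy]
    · have hex : ∃ j0, x j0 ≠ y j0 := by
        by_contra hno
        push_neg at hno
        exact hxy (funext hno)
      obtain ⟨j0, hj0⟩ := hex
      have hj0mem : j0 ∈ univ.filter fun j => x j ≠ y j := by simp [hj0]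
      have hnd : ¬ Depends f j0 i := fun hd => hj0 (hag j0 hd)
      set x' := Function.update x j0 (y j0) with hx'
      have h1 : f x i = f x' i := by
        by_contra hne
        exact hnd ⟨x, x', fun k hk => (Function.update_of_ne hk _ _).symm, hne⟩
      have h2 : f x' i = f y i := by
        apply ih
        · have hsub : (univ.filter fun j => x' j ≠ y j)
              ⊆ (univ.filter fun j => x j ≠ y j).erase j0 := by
            intro j hj
            simp only [mem_filter, mem_univ, true_and] at hj
            have hne : j ≠ j0 := by
              rintro rfl
              exact hj (by simp [hx'])
            refine Finset.mem_erase.mpr ⟨hne, ?_⟩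
            simp only [mem_filter, mem_univ, true_and]
            rwa [hx', Function.update_of_ne hne] at hj
          have := Finset.card_le_card hsub
          have hc2 := Finset.card_erase_of_mem hj0mem
          omega
        · intro j hd
          by_cases hjj : j = j0
          · subst hjj; simp [hx']
          · rw [hx', Function.update_of_ne hjj]
            exact hag j hd
      rw [h1, h2]

lemma fiber_dvd {n q : ℕ} (hq : 0 < q) (f : (Fin n → Fin q) → (Fin n → Fin q))
    (i : Fin n) (a : Fin q) :
    q ^ (n - (univ.filter fun j => Depends f j i).card) ∣
      (univ.filter fun x : Fin n → Fin q => f x i = a).card := by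
  classical
  set S := univ.filter fun j => Depends f j i with hS
  set r : (Fin n → Fin q) → (Fin n → Fin q) := fun x j => if j ∈ S then x j else ⟨0, hq⟩
    with hr
  have hrx : ∀ x, f x i = f (r x) i := by
    intro x
    apply depends_det i n
    · exact le_trans (Finset.card_filter_le _ _) (by simp)
    · intro j hd
      have hjS : j ∈ S := by simp [hS, hd]
      simp [hr, hjS]
  set A := univ.filter fun x : Fin n → Fin q => f x i = a with hA
  have key : A.card = (A.image r).card * q ^ (n - S.card) := by
    rw [Finset.card_eq_sum_card_fiberwise (f := r) (t := A.image r)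
      (fun x hx => mem_image_of_mem r hx)]
    have hfib : ∀ z ∈ A.image r,
        (A.filter fun x => r x = z).card = q ^ (n - S.card) := by
      intro z hz
      obtain ⟨x₀, hx₀A, hx₀⟩ := Finset.mem_image.mp hz
      have hfz : f z i = a := by
        have : f z i = f x₀ i := by
          apply depends_det i n
          · exact le_trans (Finset.card_filter_le _ _) (by simp)
          · intro j hd
            have hjS : j ∈ S := by simp [hS, hd]
            rw [← hx₀]; simp [hr, hjS]
        rw [this]
        exact (mem_filter.mp hx₀A).2
      have hset : (A.filter fun x => r x = z)
          = univ.filter fun x => ∀ j ∈ S, x j = z j := by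
        ext x
        simp only [mem_filter, mem_univ, true_and, hA]
        constructor
        · rintro ⟨-, hrxz⟩ j hjS
          rw [← hrxz]; simp [hr, hjS]
        · intro hx
          have hrz : r x = z := by
            funext j
            by_cases hjS : j ∈ S
            · simp [hr, hjS, hx j hjS]
            · rw [← hx₀]; simp [hr, hjS]
          exact ⟨by rw [hrx x, hrz, hfz], hrz⟩
      rw [hset]
      exact cylinder_card S z
    rw [Finset.sum_congr rfl hfib, Finset.sum_const, smul_eq_mul]
  exact Dvd.intro _ (by rw [key, Nat.mul_comm])

theorem dense_digraphs_exist {n q : ℕ} (hn : 2 ≤ n) (hq : 2 ≤ q) :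
    ∃ f : (Fin n → Fin q) → (Fin n → Fin q),
      ∀ π : Equiv.Perm (Fin n → Fin q),
        n ^ 2 / 4 ≤ (univ.filter (fun p : Fin n × Fin n =>
          Depends (fun y => π (f (π.symm y))) p.1 p.2)).card := by
  have hq1 : 1 < q := hq
  have hq0 : 0 < q := by omega
  set t := n / 2 with ht
  have ht1 : 1 ≤ t := by omega
  have htn : t ≤ n - 1 := by omega
  set m := t - 1 with hm
  have hmt : m + 1 = t := by omega
  have hmn1 : m + 1 ≤ n - 1 := by omega
  set k := q ^ m with hk
  have hkqn : k < q ^ n := Nat.pow_lt_pow_right hq1 (by omega)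
  set e := (finFunctionFinEquiv : (Fin n → Fin q) ≃ Fin (q ^ n)) with he
  set y0 := e.symm ⟨k, hkqn⟩ with hy0
  set D := univ.filter (fun y : Fin n → Fin q => ((e y : Fin (q ^ n)) : ℕ) < k) with hD
  have hy0D : y0 ∉ D := by simp [hD, hy0]
  have hDcard : D.card = k := by
    rw [hD]
    have h1 : (univ.filter (fun y : Fin n → Fin q => ((e y : Fin (q ^ n)) : ℕ) < k)).card = (univ.filter fun j : Fin (q ^ n) => (j : ℕ) < k).card :=
      card_filter_equiv e (fun j => (j : ℕ) < k)
    rw [h1]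
    have h2 : (univ.filter fun j : Fin (q ^ n) => (j : ℕ) < k)
        = (Finset.range k).attachFin
            (fun m' hm' => lt_trans (Finset.mem_range.mp hm') hkqn) := by
      ext j
      simp [Finset.mem_attachFin]
    rw [h2, Finset.card_attachFin, Finset.card_range]
  refine ⟨fun x => if ((e x : Fin (q ^ n)) : ℕ) < k then y0 else x, ?_⟩
  intro π
  set f : (Fin n → Fin q) → (Fin n → Fin q) :=
    fun x => if ((e x : Fin (q ^ n)) : ℕ) < k then y0 else x with hf
  set h : (Fin n → Fin q) → (Fin n → Fin q) := fun y => π (f (π.symm y)) with hh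
  set S : Fin n → Finset (Fin n) := fun i => univ.filter fun j => Depends h j i with hSdef
  set d : Fin n → ℕ := fun i => (S i).card with hd
  have hfD : ∀ y ∈ D, f y = y0 := by
    intro y hy
    simp only [hD, mem_filter, mem_univ, true_and] at hy
    simp [hf, hy]
  have hfnD : ∀ y ∉ D, f y = y := by
    intro y hy
    simp only [hD, mem_filter, mem_univ, true_and] at hy
    simp [hf, hy]
  have hbal : ∀ (i : Fin n) (a : Fin q),
      (univ.filter fun y : Fin n → Fin q => π y i = a).card = q ^ (n - 1) := by
    intro i a
    have h1 : (univ.filter fun y : Fin n → Fin q => π y i = a).card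
        = (univ.filter fun z : Fin n → Fin q => z i = a).card :=
      card_filter_equiv (π : (Fin n → Fin q) ≃ (Fin n → Fin q)) (fun z => z i = a)
    rw [h1]
    have h2 : (univ.filter fun z : Fin n → Fin q => z i = a)
        = univ.filter fun z : Fin n → Fin q =>
            ∀ j ∈ ({i} : Finset (Fin n)), z j = (fun _ => a) j := by
      ext z
      simp
    rw [h2, cylinder_card]
    simp
  set M : Fin n → Fin q → ℕ := fun i a => (D.filter fun y => π y i = a).card with hM
  have hMk : ∀ i a, M i a ≤ k := by
    intro i a
    exact le_trans (Finset.card_filter_le _ _) hDcard.le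
  have hfiber : ∀ (i : Fin n) (a : Fin q), a ≠ π y0 i →
      (univ.filter fun x => h x i = a).card = q ^ (n - 1) - M i a := by
    intro i a ha
    have h1 : (univ.filter fun x => h x i = a).card
        = (univ.filter fun y => π (f y) i = a).card := by
      rw [hh]
      exact card_filter_equiv (π.symm : (Fin n → Fin q) ≃ (Fin n → Fin q))
        (fun y => π (f y) i = a)
    rw [h1]
    have h2 := Finset.card_filter_add_card_filter_not
      (s := univ.filter fun y => π (f y) i = a) (p := fun y => y ∈ D)
    have hin : ((univ.filter fun y => π (f y) i = a).filter fun y => y ∈ D) = ∅ := by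
      ext y
      simp only [mem_filter, mem_univ, true_and, Finset.notMem_empty, iff_false, not_and]
      intro hfy hyD
      rw [hfD y hyD] at hfy
      exact ha hfy.symm
    have hout : ((univ.filter fun y => π (f y) i = a).filter fun y => ¬ (y ∈ D))
        = (univ.filter fun y => π y i = a) \ (D.filter fun y => π y i = a) := by
      ext y
      constructor
      · intro hy
        obtain ⟨hy1, hyD⟩ := Finset.mem_filter.mp hy
        have hfy := (Finset.mem_filter.mp hy1).2
        rw [hfnD y hyD] at hfy
        exact Finset.mem_sdiff.mpr ⟨Finset.mem_filter.mpr ⟨mem_univ y, hfy⟩,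
          fun hc => hyD ((Finset.mem_filter.mp hc).1)⟩
      · intro hy
        obtain ⟨hy1, hy2⟩ := Finset.mem_sdiff.mp hy
        have hfy := (Finset.mem_filter.mp hy1).2
        have hyD : y ∉ D := fun hyD => hy2 (Finset.mem_filter.mpr ⟨hyD, hfy⟩)
        exact Finset.mem_filter.mpr ⟨Finset.mem_filter.mpr ⟨mem_univ y,
          by rw [hfnD y hyD]; exact hfy⟩, hyD⟩
    have hsub : (D.filter fun y => π y i = a) ⊆ (univ.filter fun y => π y i = a) := by
      intro y hy
      exact Finset.mem_filter.mpr ⟨mem_univ y, (Finset.mem_filter.mp hy).2⟩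
    have h3 := Finset.card_sdiff_of_subset hsub
    rw [hin, hout] at h2
    rw [hbal i a] at h3
    simp only [Finset.card_empty] at h2
    have hMeq : (D.filter fun y => π y i = a).card = M i a := by rw [hM]
    rw [hMeq] at h3
    omega
  have hkey : ∀ i : Fin n, d i < n - m → ∀ y ∈ D, π y i = π y0 i := by
    intro i hdi y hyD
    by_contra hne
    set a := π y i with ha
    have hay0 : a ≠ π y0 i := hne
    have hMpos : 0 < M i a :=
      Finset.card_pos.mpr ⟨y, Finset.mem_filter.mpr ⟨hyD, rfl⟩⟩
    have hdi' : (univ.filter fun j => Depends h j i).card = d i := by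
      simp only [hd, hSdef]
    have hdvd1 : q ^ (m + 1) ∣ (univ.filter fun x => h x i = a).card := by
      refine dvd_trans (pow_dvd_pow q ?_) (fiber_dvd hq0 h i a)
      rw [hdi']
      omega
    rw [hfiber i a hay0] at hdvd1
    have hq1n : q ^ (m + 1) ∣ q ^ (n - 1) := pow_dvd_pow q hmn1
    have hkle : k ≤ q ^ (n - 1) := by
      rw [hk]
      exact Nat.pow_le_pow_right (by omega) (by omega)
    have hMle : M i a ≤ q ^ (n - 1) := le_trans (hMk i a) hkle
    have hdvd2 : q ^ (m + 1) ∣ M i a := by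
      have heq : M i a = q ^ (n - 1) - (q ^ (n - 1) - M i a) := by omega
      rw [heq]
      exact Nat.dvd_sub hq1n hdvd1
    have hMlt : M i a < q ^ (m + 1) :=
      lt_of_le_of_lt (hMk i a) (Nat.pow_lt_pow_right hq1 (Nat.lt_succ_self m))
    have := Nat.eq_zero_of_dvd_of_lt hdvd2 hMlt
    omega
  set I := univ.filter (fun i : Fin n => d i < n - m) with hI
  have hIcard : m + 1 ≤ n - I.card := by
    have hEcard : ((insert y0 D).image π).card = k + 1 := by
      rw [Finset.card_image_of_injective _ π.injective,
        Finset.card_insert_of_notMem hy0D, hDcard]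
    have hEsub : ((insert y0 D).image π)
        ⊆ univ.filter fun z => ∀ i' ∈ I, z i' = π y0 i' := by
      intro z hz
      obtain ⟨y, hy, rfl⟩ := Finset.mem_image.mp hz
      simp only [mem_filter, mem_univ, true_and]
      intro i' hi'
      have hdi' : d i' < n - m := (Finset.mem_filter.mp hi').2
      rcases Finset.mem_insert.mp hy with rfl | hyD
      · rfl
      · exact hkey i' hdi' y hyD
    have hle : k + 1 ≤ q ^ (n - I.card) := by
      have h4 := Finset.card_le_card hEsub
      rwa [hEcard, cylinder_card I (π y0)] at h4
    have h5 : q ^ m < q ^ (n - I.card) := lt_of_lt_of_le (by omega) hle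
    have h6 := (Nat.pow_lt_pow_iff_right hq1).mp h5
    omega
  have hBsub : (Iᶜ.biUnion fun i => (S i).image fun j => (j, i))
      ⊆ univ.filter (fun p : Fin n × Fin n => Depends h p.1 p.2) := by
    intro p hp
    obtain ⟨i, hi, hpi⟩ := Finset.mem_biUnion.mp hp
    obtain ⟨j, hj, rfl⟩ := Finset.mem_image.mp hpi
    refine Finset.mem_filter.mpr ⟨mem_univ _, ?_⟩
    have := Finset.mem_filter.mp (by rw [hSdef] at hj; exact hj)
    exact this.2
  have hBcard : (Iᶜ.biUnion fun i => (S i).image fun j => (j, i)).card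
      = ∑ i ∈ Iᶜ, d i := by
    rw [Finset.card_biUnion]
    · refine Finset.sum_congr rfl fun i _ => ?_
      rw [Finset.card_image_of_injective _ (fun a b hab => congrArg Prod.fst hab)]
    · intro x hx y hy hxy
      rw [Function.onFun, Finset.disjoint_left]
      intro p hp1 hp2
      obtain ⟨j1, _, hj1⟩ := Finset.mem_image.mp hp1
      obtain ⟨j2, _, hj2⟩ := Finset.mem_image.mp hp2
      apply hxy
      have := congrArg Prod.snd hj1
      have := congrArg Prod.snd hj2
      exact (congrArg Prod.snd hj1).trans (congrArg Prod.snd hj2).symm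
  have hsum : Iᶜ.card * (n - m) ≤ ∑ i ∈ Iᶜ, d i := by
    have h7 : ∀ i ∈ Iᶜ, n - m ≤ d i := by
      intro i hi
      have h8 : ¬ (d i < n - m) := by
        have := Finset.mem_compl.mp hi
        simpa [hI] using this
      omega
    have := Finset.card_nsmul_le_sum Iᶜ d (n - m) h7
    simpa [smul_eq_mul] using this
  have hIc : Iᶜ.card = n - I.card := by
    rw [Finset.card_compl, Fintype.card_fin]
  have hfinal : (m + 1) * (n - m)
      ≤ (univ.filter (fun p : Fin n × Fin n => Depends h p.1 p.2)).card :=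
    calc (m + 1) * (n - m) ≤ Iᶜ.card * (n - m) := by
          apply Nat.mul_le_mul_right
          omega
    _ ≤ ∑ i ∈ Iᶜ, d i := hsum
    _ = (Iᶜ.biUnion fun i => (S i).image fun j => (j, i)).card := hBcard.symm
    _ ≤ _ := Finset.card_le_card hBsub
  have harith : n ^ 2 / 4 ≤ (m + 1) * (n - m) := by
    have h1 : n - m = t + n % 2 + 1 := by omega
    have h2 : n ^ 2 ≤ 4 * ((m + 1) * (n - m)) := by
      rw [h1, hmt]
      have hn2 : n = 2 * t + n % 2 := by omega
      have hr : n % 2 ≤ 1 := by omega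
      have h9 : n ^ 2 = 4 * (t * t) + 4 * (t * (n % 2)) + (n % 2) * (n % 2) := by
        conv_lhs => rw [hn2]
        ring
      have h10 : 4 * (t * (t + n % 2 + 1)) = 4 * (t * t) + 4 * (t * (n % 2)) + 4 * t := by
        ring
      have h11 : n % 2 * (n % 2) ≤ 1 := by
        rcases Nat.mod_two_eq_zero_or_one n with hh2 | hh2 <;> simp [hh2]
      linarith [ht1, h9, h10, h11]
    calc n ^ 2 / 4 ≤ (4 * ((m + 1) * (n - m))) / 4 := Nat.div_le_div_right h2
    _ = (m + 1) * (n - m) := by omega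
  exact le_trans harith hfinal
end
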